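/- Let A be a Noetherian local commutative ring, X a set, and u an ultrafilter on X, and let R be the ultrapower of A along u, i.e. the ring Filter.Germ (u : Filter X) A of germs of functions X → A along u. Let f ∈ R be a nonzerodivisor of R that is not a unit. Let E1, E2, E3 be finite free R-modules and let d1 : E1 → E2 and d2 : E2 → E3 be R-linear maps with d2 ∘ d1 = 0. If the induced sequence E1/fE1 → E2/fE2 → E3/fE3 is exact at the middle term (that is, for every x ∈ E2 with d2 x ∈ f·E3 there exist y ∈ E1 and z ∈ E2 with x = d1 y + f·z), then ker d2 = range d1. -/

import Mathlib

open Filter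

section Aux

variable {A : Type*} [CommRing A]

section core
variable [IsNoetherianRing A] [IsLocalRing A]
variable {ι1 ι2 ι3 : Type*} [Fintype ι2]

omit [Fintype ι2] in
lemma core_lemma' (f : A) (hnzd : ∀ a, f * a = 0 → a = 0) (hm : f ∈ IsLocalRing.maximalIdeal A)
    (d1 : (ι1 → A) →ₗ[A] (ι2 → A)) (d2 : (ι2 → A) →ₗ[A] (ι3 → A))
    [Module.Finite A (ι2 → A)]
    (hc : ∀ x, d2 (d1 x) = 0)
    (hex : ∀ x, (∃ z, d2 x = f • z) → ∃ y z, x = d1 y + f • z) :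
    ∀ x, d2 x = 0 → x ∈ LinearMap.range d1 := by
  have key : LinearMap.ker d2 ≤ LinearMap.range d1 ⊔ (Ideal.span {f}) • LinearMap.ker d2 := by
    intro x hx
    rw [LinearMap.mem_ker] at hx
    obtain ⟨y, z, hyz⟩ := hex x ⟨0, by rw [hx, smul_zero]⟩
    have hz : z ∈ LinearMap.ker d2 := by
      rw [LinearMap.mem_ker]
      have h1 : f • d2 z = 0 := by
        have := congrArg d2 hyz
        rw [hx, map_add, hc, zero_add, map_smul] at this
        exact this.symm
      funext j
      exact hnzd (d2 z j) (congrFun h1 j)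
    rw [hyz]
    exact Submodule.add_mem_sup (LinearMap.mem_range_self d1 y)
      (Submodule.smul_mem_smul (Ideal.mem_span_singleton_self f) hz)
  have hfg : (LinearMap.ker d2).FG :=
    (isNoetherian_def.mp inferInstance) (LinearMap.ker d2)
  have hjac : Ideal.span {f} ≤ Ideal.jacobson ⊥ := by
    rw [Ideal.span_le, Set.singleton_subset_iff]
    rw [IsLocalRing.jacobson_eq_maximalIdeal ⊥ bot_ne_top]
    exact hm
  have := Submodule.le_of_le_smul_of_le_jacobson_bot hfg hjac key
  intro x hx
  exact this (LinearMap.mem_ker.mpr hx)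

lemma core_lemma (f : A) (hnzd : ∀ a, f * a = 0 → a = 0) (hm : f ∈ IsLocalRing.maximalIdeal A)
    (d1 : (ι1 → A) →ₗ[A] (ι2 → A)) (d2 : (ι2 → A) →ₗ[A] (ι3 → A))
    (hc : ∀ x, d2 (d1 x) = 0)
    (hex : ∀ x, (∃ z, d2 x = f • z) → ∃ y z, x = d1 y + f • z) :
    ∀ x, d2 x = 0 → x ∈ LinearMap.range d1 :=
  core_lemma' f hnzd hm d1 d2 hc hex

end core

variable {X : Type*} {u : Ultrafilter X}

lemma germ_mulVec {ι κ : Type*} [Fintype ι] (N : X → Matrix κ ι A) (V : X → ι → A) (j : κ) :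
    Matrix.mulVec (fun j i => (↑(fun x => N x j i) : Germ (u : Filter X) A))
      (fun i => (↑(fun x => V x i) : Germ (u : Filter X) A)) j
      = ↑(fun x => (N x).mulVec (V x) j) := by
  simp only [Matrix.mulVec, dotProduct]
  rw [show (↑(fun x => ∑ i, N x j i * V x i) : Germ (u : Filter X) A)
      = Filter.Germ.coeRingHom (u : Filter X) (∑ i, fun x => N x j i * V x i) by
    rw [Filter.Germ.coe_coeRingHom]; congr 1; funext x; simp ]
  rw [map_sum]
  rfl

lemma ae_nonunit (g : X → A) (h : ¬ IsUnit (↑g : Germ (u : Filter X) A)) :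
    ∀ᶠ x in (u : Filter X), ¬ IsUnit (g x) := by
  refine (Ultrafilter.eventually_not (f := u)).mpr fun hS => h ?_
  classical
  set hinv : X → A := fun x => if hx : IsUnit (g x) then ↑hx.unit⁻¹ else 0 with hdef
  refine IsUnit.of_mul_eq_one (↑hinv) ?_
  rw [← Filter.Germ.coe_mul, ← Filter.Germ.coe_one, Filter.Germ.coe_eq]
  filter_upwards [hS] with x hx
  simp only [hdef, dif_pos hx, Pi.mul_apply, Pi.one_apply]
  calc g x * ↑hx.unit⁻¹ = ↑hx.unit * ↑hx.unit⁻¹ := by rw [hx.unit_spec]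
  _ = 1 := hx.unit.mul_inv

lemma ae_nzd (g : X → A)
    (h : ∀ a : Germ (u : Filter X) A, (↑g : Germ (u : Filter X) A) * a = 0 → a = 0) :
    ∀ᶠ x in (u : Filter X), ∀ a : A, g x * a = 0 → a = 0 := by
  by_contra hT
  rw [← Ultrafilter.eventually_not (f := u)] at hT
  have : ∀ x, ∃ a : A, (¬ (∀ a : A, g x * a = 0 → a = 0)) → (g x * a = 0 ∧ a ≠ 0) := by
    intro x
    by_cases hx : ∀ a : A, g x * a = 0 → a = 0
    · exact ⟨0, fun h' => absurd hx h'⟩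
    · push_neg at hx
      obtain ⟨a, ha1, ha2⟩ := hx
      exact ⟨a, fun _ => ⟨ha1, ha2⟩⟩
  choose a ha using this
  have h0 : (↑g : Germ (u : Filter X) A) * ↑a = 0 := by
    rw [← Filter.Germ.coe_mul, ← Filter.Germ.coe_zero, Filter.Germ.coe_eq]
    filter_upwards [hT] with x hx
    exact (ha x hx).1
  have := h _ h0
  rw [← Filter.Germ.coe_zero, Filter.Germ.coe_eq] at this
  obtain ⟨x, hx1, hx2⟩ := (hT.and this).exists
  exact (ha x hx1).2 hx2

/-- Lift a finite family of germs to a family of functions. -/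
lemma lift_vec {ι : Type*} (v : ι → Germ (u : Filter X) A) :
    ∃ V : X → ι → A, ∀ i, (↑(fun x => V x i) : Germ (u : Filter X) A) = v i := by
  have : ∀ i, ∃ vi : X → A, (↑vi : Germ (u : Filter X) A) = v i :=
    fun i => (v i).inductionOn fun vi => ⟨vi, rfl⟩
  choose V hV using this
  exact ⟨fun x i => V i x, hV⟩

/-- The vector version of the main theorem. -/
theorem vec_version [IsNoetherianRing A] [IsLocalRing A]
    {ι1 ι2 ι3 : Type*} [Fintype ι1] [Fintype ι2] [Fintype ι3]
    [DecidableEq ι1] [DecidableEq ι2]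
    (f : Germ (u : Filter X) A)
    (hf_nzd : ∀ a : Germ (u : Filter X) A, f * a = 0 → a = 0)
    (hf_n_unit : ¬ IsUnit f)
    (D1 : (ι1 → Germ (u : Filter X) A) →ₗ[Germ (u : Filter X) A] (ι2 → Germ (u : Filter X) A))
    (D2 : (ι2 → Germ (u : Filter X) A) →ₗ[Germ (u : Filter X) A] (ι3 → Germ (u : Filter X) A))
    (hc : ∀ x, D2 (D1 x) = 0)
    (hmodf : ∀ x, (∃ z3, D2 x = f • z3) → ∃ y z, x = D1 y + f • z) :
    LinearMap.ker D2 = LinearMap.range D1 := by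
  classical
  -- lift f
  obtain ⟨g, rfl⟩ : ∃ g : X → A, (↑g : Germ (u : Filter X) A) = f :=
    f.inductionOn fun g => ⟨g, rfl⟩
  -- matrices of D1, D2 and their lifts
  set M1 := LinearMap.toMatrix' D1 with hM1
  set M2 := LinearMap.toMatrix' D2 with hM2
  have hD1 : ∀ v, D1 v = M1.mulVec v := by
    intro v; rw [hM1]; rw [← Matrix.toLin'_apply, Matrix.toLin'_toMatrix']
  have hD2 : ∀ v, D2 v = M2.mulVec v := by
    intro v; rw [hM2]; rw [← Matrix.toLin'_apply, Matrix.toLin'_toMatrix']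
  obtain ⟨N1, hN1⟩ : ∃ N : X → Matrix ι2 ι1 A,
      ∀ j i, (↑(fun x => N x j i) : Germ (u : Filter X) A) = M1 j i := by
    have : ∀ j i, ∃ m : X → A, (↑m : Germ (u : Filter X) A) = M1 j i :=
      fun j i => (M1 j i).inductionOn fun m => ⟨m, rfl⟩
    choose N hN using this
    exact ⟨fun x j i => N j i x, hN⟩
  obtain ⟨N2, hN2⟩ : ∃ N : X → Matrix ι3 ι2 A,
      ∀ j i, (↑(fun x => N x j i) : Germ (u : Filter X) A) = M2 j i := by
    have : ∀ j i, ∃ m : X → A, (↑m : Germ (u : Filter X) A) = M2 j i :=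
      fun j i => (M2 j i).inductionOn fun m => ⟨m, rfl⟩
    choose N hN using this
    exact ⟨fun x j i => N j i x, hN⟩
  -- application of D1, D2 to lifted vectors is pointwise mulVec
  have happ1 : ∀ (V : X → ι1 → A) (j : ι2),
      D1 (fun i => (↑(fun x => V x i) : Germ (u : Filter X) A)) j
        = ↑(fun x => (N1 x).mulVec (V x) j) := by
    intro V j
    rw [hD1, ← germ_mulVec N1 V j]
    congr 1
    funext j' i'
    exact (hN1 j' i').symm
  have happ2 : ∀ (V : X → ι2 → A) (j : ι3),
      D2 (fun i => (↑(fun x => V x i) : Germ (u : Filter X) A)) j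
        = ↑(fun x => (N2 x).mulVec (V x) j) := by
    intro V j
    rw [hD2, ← germ_mulVec N2 V j]
    congr 1
    funext j' i'
    exact (hN2 j' i').symm
  -- the complex condition holds pointwise a.e.
  have hcomp_ae : ∀ᶠ x in (u : Filter X), ∀ v : ι1 → A, (N2 x).mulVec ((N1 x).mulVec v) = 0 := by
    have hentry : ∀ (i : ι1) (j : ι3), ∀ᶠ x in (u : Filter X),
        (N2 x).mulVec ((N1 x).mulVec (Pi.single i 1)) j = 0 := by
      intro i j
      set Vi : X → ι1 → A := fun _ => Pi.single i 1 with hVi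
      have h1 : D1 (fun i' => (↑(fun x => Vi x i') : Germ (u : Filter X) A))
          = fun j' => (↑(fun x => (N1 x).mulVec (Vi x) j') : Germ (u : Filter X) A) :=
        funext fun j' => happ1 Vi j'
      have h2 : D2 (D1 (fun i' => (↑(fun x => Vi x i') : Germ (u : Filter X) A))) j
          = ↑(fun x => (N2 x).mulVec ((N1 x).mulVec (Vi x)) j) := by
        rw [h1]; exact happ2 (fun x => (N1 x).mulVec (Vi x)) j
      rw [hc] at h2
      rw [show ((0 : ι3 → Germ (u : Filter X) A) j) = ((↑(fun _ : X => (0:A)) : Germ (u : Filter X) A)) from rfl,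
        Filter.Germ.coe_eq] at h2
      filter_upwards [h2] with x hx
      exact hx.symm
    have hall : ∀ᶠ x in (u : Filter X), ∀ (i : ι1) (j : ι3),
        (N2 x).mulVec ((N1 x).mulVec (Pi.single i 1)) j = 0 := by
      rw [eventually_all]
      intro i
      rw [eventually_all]
      exact fun j => hentry i j
    filter_upwards [hall] with x hx v
    have hzero : N2 x * N1 x = 0 := by
      ext j i
      have h := hx i j
      rw [Matrix.mulVec_mulVec] at h
      simpa [Matrix.mulVec_single] using h
    rw [Matrix.mulVec_mulVec, hzero, Matrix.zero_mulVec]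
  -- exactness mod f holds pointwise a.e.
  set P : X → Prop := fun x => ∀ w : ι2 → A,
      (∃ z, (N2 x).mulVec w = g x • z) →
      ∃ y z, w = (N1 x).mulVec y + g x • z with hP
  have hP_ae : ∀ᶠ x in (u : Filter X), P x := by
    by_contra hT
    rw [← Ultrafilter.eventually_not (f := u)] at hT
    have hch : ∀ x, ∃ (w : ι2 → A) (zz : ι3 → A), ¬ P x →
        ((N2 x).mulVec w = g x • zz ∧ ∀ y z, w ≠ (N1 x).mulVec y + g x • z) := by
      intro x
      by_cases hx : P x
      · exact ⟨0, 0, fun h' => absurd hx h'⟩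
      · simp only [hP] at hx
        push_neg at hx
        obtain ⟨w, ⟨zz, hzz⟩, hw⟩ := hx
        exact ⟨w, zz, fun _ => ⟨hzz, fun y z hyz => hw y z hyz⟩⟩
    choose w zz hw using hch
    set W : ι2 → Germ (u : Filter X) A := fun i => ↑(fun x => w x i) with hW
    set Z : ι3 → Germ (u : Filter X) A := fun k => ↑(fun x => zz x k) with hZ
    have hDW : D2 W = (↑g : Germ (u : Filter X) A) • Z := by
      funext j
      rw [hW, happ2 w j]
      show _ = (↑g : Germ (u : Filter X) A) * Z j
      rw [hZ, ← Filter.Germ.coe_mul, Filter.Germ.coe_eq]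
      filter_upwards [hT] with x hx
      exact congrFun ((hw x hx).1) j
    obtain ⟨y, z, hyz⟩ := hmodf W ⟨Z, hDW⟩
    obtain ⟨Y, hY⟩ := lift_vec (u := u) y
    obtain ⟨Zl, hZl⟩ := lift_vec (u := u) z
    have hae0 : ∀ᶠ x in (u : Filter X), ∀ j, w x j = (N1 x).mulVec (Y x) j + g x * Zl x j := by
      rw [eventually_all]
      intro j
      have : W j = D1 y j + (↑g : Germ (u : Filter X) A) * z j := by
        rw [hyz]; rfl
      rw [hW] at this
      rw [show y = fun i => (↑(fun x => Y x i) : Germ (u : Filter X) A) from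
        (funext fun i => (hY i).symm)] at this
      rw [happ1 Y j, ← hZl j, ← Filter.Germ.coe_mul, ← Filter.Germ.coe_add,
        Filter.Germ.coe_eq] at this
      filter_upwards [this] with x hx
      exact hx
    have hae : ∀ᶠ x in (u : Filter X), w x = (N1 x).mulVec (Y x) + g x • Zl x := by
      filter_upwards [hae0] with x hx
      funext j
      exact hx j
    obtain ⟨x, hx1, hx2⟩ := (hT.and hae).exists
    exact (hw x hx1).2 (Y x) (Zl x) hx2
  -- the main argument
  apply le_antisymm
  · intro v hv
    rw [LinearMap.mem_ker] at hv
    obtain ⟨V, hV⟩ := lift_vec (u := u) v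
    have hVv : v = fun i => (↑(fun x => V x i) : Germ (u : Filter X) A) :=
      funext fun i => (hV i).symm
    have hker_ae0 : ∀ᶠ x in (u : Filter X), ∀ j, (N2 x).mulVec (V x) j = 0 := by
      rw [eventually_all]
      intro j
      have : D2 v j = 0 := congrFun hv j
      rw [hVv, happ2 V j] at this
      rw [show (0 : Germ (u : Filter X) A) = ↑(fun _ : X => (0:A)) from rfl,
        Filter.Germ.coe_eq] at this
      filter_upwards [this] with x hx
      exact hx
    have hker_ae : ∀ᶠ x in (u : Filter X), (N2 x).mulVec (V x) = 0 := by
      filter_upwards [hker_ae0] with x hx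
      funext j
      exact hx j
    -- combine all a.e. conditions
    have hgood : ∀ᶠ x in (u : Filter X),
        ((N2 x).mulVec (V x) = 0 ∧ ¬ IsUnit (g x)) ∧
        ((∀ a : A, g x * a = 0 → a = 0) ∧ ∀ v' : ι1 → A, (N2 x).mulVec ((N1 x).mulVec v') = 0) ∧
         P x :=
      ((hker_ae.and (ae_nonunit g hf_n_unit)).and
        (((ae_nzd g hf_nzd).and hcomp_ae).and hP_ae))
    -- pointwise solve using the Noetherian local case
    have hsol : ∀ x, ∃ y : ι1 → A,
        (((N2 x).mulVec (V x) = 0 ∧ ¬ IsUnit (g x)) ∧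
        ((∀ a : A, g x * a = 0 → a = 0) ∧ ∀ v' : ι1 → A, (N2 x).mulVec ((N1 x).mulVec v') = 0) ∧
         P x) → (N1 x).mulVec y = V x := by
      intro x
      by_cases hx : (((N2 x).mulVec (V x) = 0 ∧ ¬ IsUnit (g x)) ∧
        ((∀ a : A, g x * a = 0 → a = 0) ∧ ∀ v' : ι1 → A, (N2 x).mulVec ((N1 x).mulVec v') = 0) ∧
         P x)
      · obtain ⟨⟨hker, hnu⟩, ⟨hnzd, hcomp⟩, hPx⟩ := hx
        have hm : g x ∈ IsLocalRing.maximalIdeal A := hnu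
        have := core_lemma (g x) hnzd hm (Matrix.toLin' (N1 x)) (Matrix.toLin' (N2 x))
          (by intro v'; simp only [Matrix.toLin'_apply]; exact hcomp v')
          (by intro w hw
              apply hPx w
              simpa only [Matrix.toLin'_apply] using hw)
          (V x) (by simpa only [Matrix.toLin'_apply] using hker)
        obtain ⟨y, hy⟩ := this
        exact ⟨y, fun _ => by simpa only [Matrix.toLin'_apply] using hy⟩
      · exact ⟨0, fun h' => absurd h' hx⟩
    choose Y hY2 using hsol
    refine ⟨fun i => ↑(fun x => Y x i), ?_⟩
    funext j
    rw [happ1 Y j, hVv]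
    rw [Filter.Germ.coe_eq]
    filter_upwards [hgood] with x hx
    exact congrFun (hY2 x hx) j
  · rintro v ⟨y, rfl⟩
    rw [LinearMap.mem_ker]
    exact hc y

end Aux

/-- **Lemma 3.1 (ultrapower case).**
Let `A` be a Noetherian local commutative ring, `u` an ultrafilter on a set `X`, and
`R = Filter.Germ u A` the ultrapower of `A` along `u`.  Let `f ∈ R` be a nonzerodivisor
which is not a unit.  Given a three-term complex `E1 → E2 → E3` of finite free
`R`-modules which becomes exact at the middle term after reduction mod `f`, the
original complex is exact at the middle term. -/
theorem stmt1 (A : Type*) [CommRing A] [IsNoetherianRing A] [IsLocalRing A]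
    (X : Type*) (u : Ultrafilter X)
    (f : Filter.Germ (u : Filter X) A)
    (hf_nzd : ∀ a : Filter.Germ (u : Filter X) A, f * a = 0 → a = 0)
    (hf_n_unit : ¬ IsUnit f)
    (E1 E2 E3 : Type*)
    [AddCommGroup E1] [Module (Filter.Germ (u : Filter X) A) E1]
    [Module.Finite (Filter.Germ (u : Filter X) A) E1]
    [Module.Free (Filter.Germ (u : Filter X) A) E1]
    [AddCommGroup E2] [Module (Filter.Germ (u : Filter X) A) E2]
    [Module.Finite (Filter.Germ (u : Filter X) A) E2]
    [Module.Free (Filter.Germ (u : Filter X) A) E2]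
    [AddCommGroup E3] [Module (Filter.Germ (u : Filter X) A) E3]
    [Module.Finite (Filter.Germ (u : Filter X) A) E3]
    [Module.Free (Filter.Germ (u : Filter X) A) E3]
    (d1 : E1 →ₗ[Filter.Germ (u : Filter X) A] E2)
    (d2 : E2 →ₗ[Filter.Germ (u : Filter X) A] E3)
    (hcomplex : ∀ x : E1, d2 (d1 x) = 0)
    (hmodf : ∀ x : E2, (∃ z3 : E3, d2 x = f • z3) →
      ∃ (y : E1) (z : E2), x = d1 y + f • z) :
    LinearMap.ker d2 = LinearMap.range d1 := by
  classical
  let R := Filter.Germ (u : Filter X) A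
  let b1 := Module.Free.chooseBasis R E1
  let b2 := Module.Free.chooseBasis R E2
  let b3 := Module.Free.chooseBasis R E3
  let e1 := b1.equivFun
  let e2 := b2.equivFun
  let e3 := b3.equivFun
  set D1 : (Module.Free.ChooseBasisIndex R E1 → R) →ₗ[R]
      (Module.Free.ChooseBasisIndex R E2 → R) :=
    (e2 : E2 →ₗ[R] _) ∘ₗ d1 ∘ₗ (e1.symm : _ →ₗ[R] E1) with hD1
  set D2 : (Module.Free.ChooseBasisIndex R E2 → R) →ₗ[R]
      (Module.Free.ChooseBasisIndex R E3 → R) :=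
    (e3 : E3 →ₗ[R] _) ∘ₗ d2 ∘ₗ (e2.symm : _ →ₗ[R] E2) with hD2
  have hc : ∀ x, D2 (D1 x) = 0 := by
    intro x
    simp only [hD1, hD2, LinearMap.comp_apply, LinearEquiv.coe_coe,
      LinearEquiv.symm_apply_apply]
    rw [hcomplex]
    simp
  have hmodf' : ∀ x, (∃ z3, D2 x = f • z3) → ∃ y z, x = D1 y + f • z := by
    intro x ⟨z3, hz3⟩
    have : d2 (e2.symm x) = f • e3.symm z3 := by
      have := congrArg e3.symm hz3
      simpa only [hD2, LinearMap.comp_apply, LinearEquiv.coe_coe,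
        LinearEquiv.symm_apply_apply, map_smul] using this
    obtain ⟨y, z, hyz⟩ := hmodf (e2.symm x) ⟨e3.symm z3, this⟩
    refine ⟨e1 y, e2 z, ?_⟩
    have := congrArg e2 hyz
    simpa only [hD1, LinearMap.comp_apply, LinearEquiv.coe_coe,
      LinearEquiv.symm_apply_apply, map_add, map_smul,
      LinearEquiv.apply_symm_apply] using this
  have hker_range : LinearMap.ker D2 = LinearMap.range D1 :=
    vec_version f hf_nzd hf_n_unit D1 D2 hc hmodf'
  ext x
  constructor
  · intro hx
    rw [LinearMap.mem_ker] at hx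
    have : e2 x ∈ LinearMap.ker D2 := by
      rw [LinearMap.mem_ker, hD2]
      simp only [LinearMap.comp_apply, LinearEquiv.coe_coe, LinearEquiv.symm_apply_apply]
      rw [hx]; simp
    rw [hker_range] at this
    obtain ⟨y, hy⟩ := this
    refine ⟨e1.symm y, ?_⟩
    have := congrArg e2.symm hy
    simpa only [hD1, LinearMap.comp_apply, LinearEquiv.coe_coe,
      LinearEquiv.symm_apply_apply] using this
  · rintro ⟨y, rfl⟩
    rw [LinearMap.mem_ker]
    exact hcomplex y
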